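/- There exists a countable family of classes H₁, H₂, ... over a countable X, each satisfying UUS and with C(H_i) = 0 for all i, such that H = ⋃_{i ∈ ℕ} H_i is not generatable in the limit. Concretely, X = ℚ_{>0}, Q_i = {p/p_i : p prime}, and H_i = {x ↦ 1[x ∈ Q_i ∪ A] : A ⊆ ℚ_{>0}}. -/
import Mathlib


open Set

variable {X : Type*}

/-- The set of distinct examples seen in the first `t` steps of the stream `x`. -/
def seenSet (x : ℕ → X) (t : ℕ) : Set X := x '' {i | i < t}

/-- The finite prefix `x₁, ..., x_t` of the stream, as a list. -/
def prefList (x : ℕ → X) (t : ℕ) : List X := List.ofFn (fun i : Fin t => x i)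

/-- The version space of `H` induced by the positive examples `S`. -/
def versionSpace (H : Set (Set X)) (S : Set X) : Set (Set X) := {h | h ∈ H ∧ S ⊆ h}

/-- The closure `⟨S⟩_H`: common positive examples of all consistent hypotheses. -/
def hclosure (H : Set (Set X)) (S : Set X) : Set X := ⋂₀ versionSpace H S

/-- There exist `d` distinct examples with nonempty version space and finite closure. -/
def FinClosureWitness (H : Set (Set X)) (d : ℕ) : Prop :=
  ∃ S : Finset X, S.card = d ∧ (versionSpace H ↑S).Nonempty ∧ (hclosure H ↑S).Finite

/-- The Closure dimension of `H` is infinite. -/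
def ClosureDimInf (H : Set (Set X)) : Prop := ∀ n : ℕ, ∃ d, n ≤ d ∧ FinClosureWitness H d

/-- The Closure dimension of `H` is at most `d`. -/
def ClosureDimLE (H : Set (Set X)) (d : ℕ) : Prop := ∀ d', d < d' → ¬ FinClosureWitness H d'

/-- Uniformly Unbounded Support property. -/
def UUS (H : Set (Set X)) : Prop := ∀ h ∈ H, h.Infinite

/-- The generator `G` outputs an unseen positive example of `h` at step `s`. -/
def GenOK (G : List X → X) (h : Set X) (x : ℕ → X) (s : ℕ) : Prop :=
  G (prefList x s) ∈ h \ seenSet x s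

def UniformlyGeneratable (H : Set (Set X)) : Prop :=
  ∃ G : List X → X, ∃ d : ℕ, ∀ h ∈ H, ∀ x : ℕ → X, (∀ i, x i ∈ h) →
    ∀ t, (seenSet x t).ncard = d → ∀ s, t ≤ s → GenOK G h x s

def NonUniformlyGeneratable (H : Set (Set X)) : Prop :=
  ∃ G : List X → X, ∀ h ∈ H, ∃ d : ℕ, ∀ x : ℕ → X, (∀ i, x i ∈ h) →
    ∀ t, (seenSet x t).ncard = d → ∀ s, t ≤ s → GenOK G h x s

/-- `x` is an enumeration of the support `h`. -/
def IsEnum (h : Set X) (x : ℕ → X) : Prop := (∀ i, x i ∈ h) ∧ ∀ y ∈ h, ∃ i, x i = y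

def GeneratableInLimit (H : Set (Set X)) : Prop :=
  ∃ G : List X → X, ∀ h ∈ H, ∀ x : ℕ → X, IsEnum h x →
    ∃ t, ∀ s, t ≤ s → GenOK G h x s

/-- `Q_i = {p / p_i : p prime}` as a subset of `ℚ`, where `p_i` is the `i`-th prime. -/
def Qrat (i : ℕ) : Set ℚ :=
  {q : ℚ | ∃ p : ℕ, p.Prime ∧ q = (p : ℚ) / (Nat.nth Nat.Prime i : ℚ)}

/-- `H_i = {x ↦ 1[x ∈ Q_i ∪ A] : A ⊆ ℚ_{>0}}`. -/
def Hrat (i : ℕ) : Set (Set ℚ) :=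
  {h | ∃ A : Set ℚ, (∀ a ∈ A, 0 < a) ∧ h = Qrat i ∪ A}

/-- each `Hrat i` satisfies UUS and has Closure dimension 0, yet
their countable union is not generatable in the limit. -/

noncomputable abbrev pq (k : ℕ) : ℚ := (Nat.nth Nat.Prime k : ℚ)
noncomputable abbrev qe (i k : ℕ) : ℚ := pq k / pq i

lemma nthp_prime (k : ℕ) : (Nat.nth Nat.Prime k).Prime := Nat.prime_nth_prime k

lemma pq_pos (k : ℕ) : 0 < pq k := by
  have := (nthp_prime k).pos
  unfold pq
  exact_mod_cast this

lemma pq_ne (k : ℕ) : pq k ≠ 0 := (pq_pos k).ne'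

lemma pq_inj : Function.Injective pq := by
  intro a b h
  exact Nat.nth_injective Nat.infinite_setOf_prime (Nat.cast_injective h)

lemma qe_pos (i k : ℕ) : 0 < qe i k := div_pos (pq_pos k) (pq_pos i)

lemma qe_inj (i : ℕ) : Function.Injective (qe i) := by
  intro a b h
  have h2 := (div_eq_div_iff (pq_ne i) (pq_ne i)).mp h
  exact pq_inj (mul_right_cancel₀ (pq_ne i) h2)

lemma qe_mem (i k : ℕ) : qe i k ∈ Qrat i := ⟨Nat.nth Nat.Prime k, nthp_prime k, rfl⟩

lemma Qrat_eq (i : ℕ) : Qrat i = Set.range (qe i) := by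
  ext x
  constructor
  · rintro ⟨p, hp, rfl⟩
    classical
    exact ⟨Nat.count Nat.Prime p, by simp [qe, pq, Nat.nth_count hp]⟩
  · rintro ⟨k, rfl⟩; exact qe_mem i k

lemma Qrat_infinite (i : ℕ) : (Qrat i).Infinite :=
  Set.infinite_of_injective_forall_mem (qe_inj i) (qe_mem i)

lemma Qrat_pos {i : ℕ} {x : ℚ} (hx : x ∈ Qrat i) : 0 < x := by
  obtain ⟨p, hp, rfl⟩ := hx
  exact div_pos (by exact_mod_cast hp.pos) (pq_pos i)

lemma qe_zero_zero : qe 0 0 = 1 := div_self (pq_ne 0)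

lemma one_mem_Qrat (i : ℕ) : (1 : ℚ) ∈ Qrat i :=
  ⟨Nat.nth Nat.Prime i, nthp_prime i, (div_self (pq_ne i)).symm⟩

lemma Qrat_inter {i j : ℕ} (hij : i ≠ j) {x : ℚ} (hi : x ∈ Qrat i) (hj : x ∈ Qrat j) :
    x = 1 := by
  obtain ⟨p, hp, rfl⟩ := hi
  obtain ⟨r, hr, he⟩ := hj
  have hmul : (p : ℚ) * (Nat.nth Nat.Prime j : ℚ) = (r : ℚ) * (Nat.nth Nat.Prime i : ℚ) := by
    rw [div_eq_div_iff (pq_ne i) (pq_ne j)] at he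
    exact he
  have hnat : p * Nat.nth Nat.Prime j = r * Nat.nth Nat.Prime i := by exact_mod_cast hmul
  have hdvd : Nat.nth Nat.Prime i ∣ p * Nat.nth Nat.Prime j :=
    ⟨r, by rw [hnat, Nat.mul_comm]⟩
  have hpi := nthp_prime i
  have hpj := nthp_prime j
  have : Nat.nth Nat.Prime i ∣ p ∨ Nat.nth Nat.Prime i ∣ Nat.nth Nat.Prime j :=
    (Nat.Prime.dvd_mul hpi).mp hdvd
  have hip : Nat.nth Nat.Prime i = p := by
    rcases this with h | h
    · exact ((Nat.prime_dvd_prime_iff_eq hpi hp).mp h)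
    · exact absurd (Nat.nth_injective Nat.infinite_setOf_prime
        ((Nat.prime_dvd_prime_iff_eq hpi hpj).mp h)) hij
  rw [← hip]
  exact div_self (pq_ne i)

/-- stream for stage `n`: copy prefix `y` below `t`, emit `qe 0 n` at `t`,
then enumerate `Qrat n`. -/
noncomputable def zstr (n t : ℕ) (y : ℕ → ℚ) : ℕ → ℚ :=
  fun i => if i < t then y i else if i = t then qe 0 n else qe n (i - t - 1)

lemma zstr_pos {y : ℕ → ℚ} (hy : ∀ i, 0 < y i) (n t i : ℕ) : 0 < zstr n t y i := by
  unfold zstr; split_ifs <;> first | exact hy i | exact qe_pos _ _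

lemma zstr_lt {y : ℕ → ℚ} {n t i : ℕ} (h : i < t) : zstr n t y i = y i := if_pos h

lemma zstr_at {y : ℕ → ℚ} (n t : ℕ) : zstr n t y t = qe 0 n := by
  simp [zstr]

lemma zstr_gt {y : ℕ → ℚ} {n t i : ℕ} (h : t < i) : zstr n t y i = qe n (i - t - 1) := by
  unfold zstr
  rw [if_neg (by omega), if_neg (by omega)]

open scoped Classical in
noncomputable def nextT (G : List ℚ → ℚ) (n : ℕ) (w : ℕ → ℚ) (t : ℕ) : ℕ :=
  if h : ∃ T, ∀ s, T ≤ s → GenOK G (Qrat n ∪ Set.range w) w s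
  then max h.choose t + 1 else t + 1

lemma nextT_gt (G : List ℚ → ℚ) (n : ℕ) (w : ℕ → ℚ) (t : ℕ) : t < nextT G n w t := by
  unfold nextT; split_ifs
  · exact lt_of_le_of_lt (le_max_right _ _) (Nat.lt_succ_self _)
  · exact Nat.lt_succ_self t

lemma nextT_spec (G : List ℚ → ℚ) (n : ℕ) (w : ℕ → ℚ) (t : ℕ)
    (h : ∃ T, ∀ s, T ≤ s → GenOK G (Qrat n ∪ Set.range w) w s) :
    GenOK G (Qrat n ∪ Set.range w) w (nextT G n w t) := by
  rw [nextT, dif_pos h]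
  exact h.choose_spec _ ((le_max_left _ _).trans (Nat.le_succ _))

noncomputable def stage (G : List ℚ → ℚ) : ℕ → ℕ × (ℕ → ℚ)
  | 0 => (0, zstr 0 0 (fun _ => 1))
  | n + 1 =>
      (nextT G n (stage G n).2 (stage G n).1,
       zstr (n + 1) (nextT G n (stage G n).2 (stage G n).1) (stage G n).2)

lemma stage_succ_fst (G : List ℚ → ℚ) (n : ℕ) :
    (stage G (n + 1)).1 = nextT G n (stage G n).2 (stage G n).1 := rfl

lemma stage_zero_fst (G : List ℚ → ℚ) : (stage G 0).1 = 0 := rfl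

lemma ww_pos (G : List ℚ → ℚ) : ∀ n i, 0 < (stage G n).2 i := by
  intro n
  induction n with
  | zero => exact zstr_pos (fun _ => one_pos) 0 0
  | succ n ih => exact zstr_pos ih (n + 1) _

lemma ww_struct (G : List ℚ → ℚ) (n : ℕ) :
    ∃ y : ℕ → ℚ, (stage G n).2 = zstr n (stage G n).1 y := by
  cases n with
  | zero => exact ⟨fun _ => 1, rfl⟩
  | succ n => exact ⟨(stage G n).2, rfl⟩

lemma ww_at (G : List ℚ → ℚ) (n : ℕ) : (stage G n).2 (stage G n).1 = qe 0 n := by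
  obtain ⟨y, hy⟩ := ww_struct G n
  rw [hy, zstr_at]

lemma ww_above (G : List ℚ → ℚ) {n i : ℕ} (h : (stage G n).1 < i) :
    (stage G n).2 i ∈ Qrat n := by
  obtain ⟨y, hy⟩ := ww_struct G n
  rw [hy, zstr_gt h]
  exact qe_mem n _

lemma ww_enum (G : List ℚ → ℚ) (n : ℕ) :
    IsEnum (Qrat n ∪ Set.range (stage G n).2) (stage G n).2 := by
  constructor
  · intro i; exact Or.inr ⟨i, rfl⟩
  · rintro z (hz | hz)
    · rw [Qrat_eq] at hz
      obtain ⟨k, rfl⟩ := hz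
      obtain ⟨y, hy⟩ := ww_struct G n
      refine ⟨(stage G n).1 + 1 + k, ?_⟩
      rw [hy, zstr_gt (by omega)]
      congr 1
      omega
    · exact hz

lemma tt_lt (G : List ℚ → ℚ) (n : ℕ) : (stage G n).1 < (stage G (n + 1)).1 := by
  rw [stage_succ_fst]
  exact nextT_gt G n _ _

lemma tt_mono (G : List ℚ → ℚ) : StrictMono fun n => (stage G n).1 :=
  strictMono_nat_of_lt_succ (tt_lt G)

lemma tt_ge (G : List ℚ → ℚ) (n : ℕ) : n ≤ (stage G n).1 := by
  induction n with
  | zero => exact Nat.zero_le _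
  | succ n ih => exact Nat.succ_le_of_lt (lt_of_le_of_lt ih (tt_lt G n))

lemma ww_agree (G : List ℚ → ℚ) {n m : ℕ} (h : n ≤ m) :
    ∀ i, i < (stage G (n + 1)).1 → (stage G m).2 i = (stage G n).2 i := by
  induction m, h using Nat.le_induction with
  | base => intro i _; rfl
  | succ m hm ih =>
      intro i hi
      have hi' : i < (stage G (m + 1)).1 :=
        lt_of_lt_of_le hi ((tt_mono G).monotone (Nat.succ_le_succ hm))
      calc (stage G (m + 1)).2 i = (stage G m).2 i := by
            show zstr (m + 1) _ _ i = _
            exact zstr_lt hi'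
        _ = (stage G n).2 i := ih i hi

noncomputable def xx (G : List ℚ → ℚ) : ℕ → ℚ := fun i => (stage G i).2 i

lemma xx_eq (G : List ℚ → ℚ) {n i : ℕ} (h : i < (stage G (n + 1)).1) :
    xx G i = (stage G n).2 i := by
  rcases le_or_gt n i with hni | hni
  · exact ww_agree G hni i h
  · have hi : i < (stage G (i + 1)).1 := lt_of_lt_of_le (Nat.lt_succ_self i) (tt_ge G (i + 1))
    exact (ww_agree G (le_of_lt hni) i hi).symm

lemma stage_of (G : List ℚ → ℚ) (i : ℕ) :
    ∃ m, (stage G m).1 ≤ i ∧ i < (stage G (m + 1)).1 := by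
  induction i with
  | zero => exact ⟨0, le_refl _, by have := tt_lt G 0; rwa [stage_zero_fst] at this⟩
  | succ i ih =>
      obtain ⟨m, hm1, hm2⟩ := ih
      rcases lt_or_ge (i + 1) (stage G (m + 1)).1 with h | h
      · exact ⟨m, by omega, h⟩
      · exact ⟨m + 1, by omega, by
          have := tt_lt G (m + 1)
          omega⟩

lemma prefList_congr {x y : ℕ → ℚ} (s : ℕ) (h : ∀ i < s, x i = y i) :
    prefList x s = prefList y s := by
  unfold prefList
  congr 1
  funext i
  exact h i i.2

lemma seenSet_congr {x y : ℕ → ℚ} (s : ℕ) (h : ∀ i < s, x i = y i) :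
    seenSet x s = seenSet y s := by
  unfold seenSet
  ext z
  constructor
  · rintro ⟨i, hi, rfl⟩; exact ⟨i, hi, (h i hi).symm⟩
  · rintro ⟨i, hi, rfl⟩; exact ⟨i, hi, h i hi⟩


theorem stmt15 :
    (∀ i : ℕ, UUS (Hrat i)) ∧ (∀ i : ℕ, ClosureDimLE (Hrat i) 0) ∧
    ¬ GeneratableInLimit (⋃ i, Hrat i) := by
  refine ⟨?_, ?_, ?_⟩
  · -- UUS
    rintro i h ⟨A, hA, rfl⟩
    exact (Qrat_infinite i).mono Set.subset_union_left
  · -- Closure dimension ≤ 0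
    rintro i d' _ ⟨S, _, _, hfin⟩
    refine (Qrat_infinite i) (hfin.subset ?_)
    intro q hq
    rintro h ⟨⟨A, hA, rfl⟩, _⟩
    exact Or.inl hq
  · -- not generatable in the limit
    rintro ⟨G, hG⟩
    -- GenOK fails for the diagonal hypothesis at each stage time
    have hstage : ∀ n, GenOK G (Qrat n ∪ Set.range (stage G n).2) (stage G n).2
        (stage G (n + 1)).1 := by
      intro n
      have hmem : Qrat n ∪ Set.range (stage G n).2 ∈ ⋃ i, Hrat i := by
        refine Set.mem_iUnion.mpr ⟨n, Set.range (stage G n).2, ?_, rfl⟩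
        rintro a ⟨i, rfl⟩
        exact ww_pos G n i
      have hex := hG _ hmem _ (ww_enum G n)
      rw [stage_succ_fst]
      exact nextT_spec G n _ _ hex
    set x := xx G with hxdef
    have hx0 : x 0 = 1 := by
      have h0 : x 0 = (stage G 0).2 0 := rfl
      rw [h0]
      have := ww_at G 0
      rw [stage_zero_fst] at this
      rw [this, qe_zero_zero]
    have hmemh : Qrat 0 ∪ Set.range x ∈ ⋃ i, Hrat i := by
      refine Set.mem_iUnion.mpr ⟨0, Set.range x, ?_, rfl⟩
      rintro a ⟨i, rfl⟩
      exact ww_pos G i i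
    have henum : IsEnum (Qrat 0 ∪ Set.range x) x := by
      constructor
      · intro i; exact Or.inr ⟨i, rfl⟩
      · rintro z (hz | hz)
        · rw [Qrat_eq] at hz
          obtain ⟨k, rfl⟩ := hz
          refine ⟨(stage G k).1, ?_⟩
          rw [hxdef, xx_eq G (tt_lt G k), ww_at G k]
        · exact hz
    obtain ⟨T, hT⟩ := hG _ hmemh x henum
    set n := T + 1 with hn
    set s := (stage G (n + 1)).1 with hs
    have hTs : T ≤ s := by
      have := tt_ge G (n + 1)
      omega
    have hok := hT s hTs
    have hfail := hstage n
    have hagree : ∀ i < s, x i = (stage G n).2 i := fun i hi => xx_eq G hi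
    have hpre : prefList x s = prefList (stage G n).2 s := prefList_congr s hagree
    have hseen : seenSet x s = seenSet (stage G n).2 s := seenSet_congr s hagree
    rw [GenOK, Set.mem_diff] at hok hfail
    rw [← hpre, ← hseen] at hfail
    set o := G (prefList x s) with ho
    obtain ⟨hoh, hons⟩ := hok
    obtain ⟨hoq, _⟩ := hfail
    have hspos : 0 < s := lt_of_le_of_lt (Nat.zero_le _) (lt_of_lt_of_le
      (by omega : 0 < n + 1) (tt_ge G (n + 1)))
    have hone : (1 : ℚ) ∈ seenSet x s := ⟨0, hspos, hx0⟩
    have honeo : o ≠ 1 := fun h => hons (h ▸ hone)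
    -- o ∈ Qrat n
    have hoQ : o ∈ Qrat n := by
      rcases hoq with h | ⟨i, hi⟩
      · exact h
      · rcases lt_or_ge i s with his | his
        · exact absurd (hseen ▸ ⟨i, his, hi⟩ : o ∈ seenSet x s) hons
        · have : (stage G n).1 < i := lt_of_lt_of_le (tt_lt G n) his
          exact hi ▸ ww_above G this
    -- but o ∈ h leads to contradiction
    rcases hoh with h | ⟨i, hi⟩
    · exact honeo (Qrat_inter (by omega : n ≠ 0) hoQ h)
    · rcases lt_or_ge i s with his | his
      · exact hons ⟨i, his, hi⟩
      · obtain ⟨m, hm1, hm2⟩ := stage_of G i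
        have hnm : n < m := by
          by_contra hc
          push_neg at hc
          have h3 : (stage G (m + 1)).1 ≤ (stage G (n + 1)).1 :=
            (tt_mono G).monotone (Nat.succ_le_succ hc)
          omega
        have hxi : x i = (stage G m).2 i := xx_eq G hm2
        rcases eq_or_lt_of_le hm1 with he | hlt
        · have : x i = qe 0 m := by rw [hxi, ← he, ww_at]
          have hQ0 : o ∈ Qrat 0 := hi ▸ this ▸ qe_mem 0 m
          exact honeo (Qrat_inter (by omega : n ≠ 0) hoQ hQ0)
        · have hQm : o ∈ Qrat m := hi ▸ hxi ▸ ww_above G hlt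
          exact honeo (Qrat_inter (by omega : n ≠ m) hoQ hQm)
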